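/- Let S be a closed linear operator on a Hilbert space and λ a point of regular type for S (i.e., there exists c > 0 with ‖(S − λI)f‖ ≥ c‖f‖ for all f ∈ dom S). Then dom S² is a core of S if and only if dom(S) ∩ ran(S − λI) is dense in ran(S − λI). -/
import Mathlib


open scoped ComplexConjugate Pointwise Topology

/-- For a closed operator `S` and a point `λ` of regular type for `S`,
`dom S²` is a core of `S` iff `dom S ∩ ran (S - λ)` is dense in `ran (S - λ)`. -/
theorem sq_domain_core_iff_dense
    {H : Type*} [NormedAddCommGroup H] [InnerProductSpace ℂ H] [CompleteSpace H]
    (S : H →ₗ.[ℂ] H) (hclosed : IsClosed (S.graph : Set (H × H))) (lam : ℂ)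
    (hreg : ∃ c : ℝ, 0 < c ∧ ∀ f : S.domain, c * ‖(f : H)‖ ≤ ‖S f - lam • (f : H)‖) :
    (closure {p : H × H |
        ∃ f : S.domain, S f ∈ S.domain ∧ p = ((f : H), S f)} = (S.graph : Set (H × H))) ↔
      closure ((S.domain : Set H) ∩ {y : H | ∃ f : S.domain, y = S f - lam • (f : H)}) =
        closure {y : H | ∃ f : S.domain, y = S f - lam • (f : H)} := by
  obtain ⟨c, hc, hbound⟩ := hreg
  set D : Set (H × H) := {p : H × H |
      ∃ f : S.domain, S f ∈ S.domain ∧ p = ((f : H), S f)} with hDdef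
  set R : Set H := {y : H | ∃ f : S.domain, y = S f - lam • (f : H)} with hRdef
  set A : Set H := (S.domain : Set H) ∩ R with hAdef
  constructor
  · -- core ⇒ dense
    intro h
    refine subset_antisymm (closure_mono Set.inter_subset_right) ?_
    refine closure_minimal ?_ isClosed_closure
    rintro y ⟨f, rfl⟩
    have hmem : ((f : H), S f) ∈ closure D := by
      rw [h]; exact S.mem_graph f
    obtain ⟨u, hu, hlim⟩ := mem_closure_iff_seq_limit.mp hmem
    choose g hg1 hg2 using hu
    rw [mem_closure_iff_seq_limit]
    refine ⟨fun n => S (g n) - lam • ((g n : H)), fun n => ⟨?_, g n, rfl⟩, ?_⟩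
    · exact S.domain.sub_mem (hg1 n) (S.domain.smul_mem lam (g n).2)
    · have h1 : Filter.Tendsto (fun n => (u n).1) Filter.atTop (𝓝 (f : H)) :=
        (continuous_fst.tendsto _).comp hlim
      have h2 : Filter.Tendsto (fun n => (u n).2) Filter.atTop (𝓝 (S f)) :=
        (continuous_snd.tendsto _).comp hlim
      have := h2.sub (h1.const_smul lam)
      refine this.congr fun n => ?_
      rw [hg2 n]
  · -- dense ⇒ core
    intro h
    refine subset_antisymm (closure_minimal ?_ hclosed) ?_
    · rintro p ⟨f, -, rfl⟩
      exact S.mem_graph f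
    · intro p hp
      obtain ⟨p1, p2⟩ := p
      obtain ⟨f, hf1, hf2⟩ := S.mem_graph_iff.mp hp
      subst hf1; subst hf2
      have hyR : S f - lam • (f : H) ∈ closure A := by
        rw [h]
        exact subset_closure ⟨f, rfl⟩
      obtain ⟨u, hu, hlim⟩ := mem_closure_iff_seq_limit.mp hyR
      choose hdom g hg using hu
      -- g n → f
      have hkey : ∀ n, S (g n) - lam • ((g n : H)) - (S f - lam • (f : H)) =
          u n - (S f - lam • (f : H)) := fun n => by rw [← hg n]
      have hnorm0 : Filter.Tendsto (fun n => ‖u n - (S f - lam • (f : H))‖)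
          Filter.atTop (𝓝 0) := tendsto_iff_norm_sub_tendsto_zero.mp hlim
      have hgf : Filter.Tendsto (fun n => ‖(g n : H) - (f : H)‖) Filter.atTop (𝓝 0) := by
        have hb : ∀ n, ‖(g n : H) - (f : H)‖ ≤ c⁻¹ * ‖u n - (S f - lam • (f : H))‖ := by
          intro n
          have := hbound (g n - f)
          have hsub : S (g n - f) = S (g n) - S f := map_sub S.toFun (g n) f
          rw [Submodule.coe_sub, hsub, smul_sub] at this
          have heq : S (g n) - S f - (lam • ((g n : H)) - lam • (f : H)) =
              u n - (S f - lam • (f : H)) := by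
            rw [← hkey n]; abel
          rw [heq] at this
          rw [inv_mul_eq_div, le_div_iff₀ hc]
          linarith
        have hc' : Filter.Tendsto (fun n => c⁻¹ * ‖u n - (S f - lam • (f : H))‖)
            Filter.atTop (𝓝 0) := by
          simpa using hnorm0.const_mul c⁻¹
        exact squeeze_zero (fun n => norm_nonneg _) hb hc'
      have hgf' : Filter.Tendsto (fun n => ((g n : H))) Filter.atTop (𝓝 (f : H)) :=
        tendsto_iff_norm_sub_tendsto_zero.mpr hgf
      -- S (g n) → S f
      have hSg : ∀ n, S (g n) = u n + lam • ((g n : H)) := fun n => by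
        rw [hg n]; abel
      have hSgf : Filter.Tendsto (fun n => S (g n)) Filter.atTop (𝓝 (S f)) := by
        have := hlim.add (hgf'.const_smul lam)
        have heq : S f - lam • (f : H) + lam • (f : H) = S f := by abel
        rw [heq] at this
        exact this.congr fun n => (hSg n).symm
      rw [mem_closure_iff_seq_limit]
      refine ⟨fun n => ((g n : H), S (g n)), fun n => ⟨g n, ?_, rfl⟩, ?_⟩
      · rw [hSg n]
        exact S.domain.add_mem (hdom n) (S.domain.smul_mem lam (g n).2)
      · exact hgf'.prodMk_nhds hSgf
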